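/- The set 𝒯₀ is invariant under cyclic permutations: if (a, b, c) ∈ 𝒯₀ then (b, c, a) ∈ 𝒯₀. -/

import Mathlib

section aux
variable {K F : Type*} [Field K] [Field F] [Algebra K F] [Fintype K]

lemma mem_range_of_pow_eq (hq1 : 1 < Fintype.card K) (z : F)
    (hz : z ^ Fintype.card K = z) : z ∈ (algebraMap K F).range := by
  classical
  set q := Fintype.card K
  set f : Polynomial F := Polynomial.X ^ q - Polynomial.X with hf
  have hfd : f.natDegree = q := FiniteField.X_pow_card_sub_X_natDegree_eq F hq1
  have hf0 : f ≠ 0 := by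
    intro h
    rw [h, Polynomial.natDegree_zero] at hfd
    omega
  have hroot : ∀ w : F, w ^ q = w → w ∈ f.roots.toFinset := by
    intro w hw
    rw [Multiset.mem_toFinset, Polynomial.mem_roots hf0]
    simp only [Multiset.mem_toFinset, Polynomial.mem_roots hf0, Polynomial.IsRoot, hf,
      Polynomial.eval_sub, Polynomial.eval_pow, Polynomial.eval_X]
    rw [hw, sub_self]
  by_contra hzK
  set s : Finset F := Finset.univ.image (fun k : K => algebraMap K F k) with hs
  have hinj : Function.Injective (fun k : K => algebraMap K F k) :=
    (algebraMap K F).injective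
  have hcards : s.card = q := by
    rw [hs, Finset.card_image_of_injective _ hinj, Finset.card_univ]
  have hzs : z ∉ s := by
    intro hmem
    rw [hs, Finset.mem_image] at hmem
    obtain ⟨k, _, hk⟩ := hmem
    exact hzK ⟨k, hk⟩
  have hsub : insert z s ⊆ f.roots.toFinset := by
    intro w hw
    rcases Finset.mem_insert.mp hw with h | h
    · exact h ▸ hroot z hz
    · rw [hs, Finset.mem_image] at h
      obtain ⟨k, _, hk⟩ := h
      refine hroot w ?_
      rw [← hk, ← map_pow, FiniteField.pow_card]
  have h1 : (insert z s).card = q + 1 := by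
    rw [Finset.card_insert_of_notMem hzs, hcards]
  have h2 : f.roots.toFinset.card ≤ q := by
    calc f.roots.toFinset.card ≤ Multiset.card f.roots := f.roots.toFinset_card_le
      _ ≤ f.natDegree := f.card_roots'
      _ = q := hfd
  have := Finset.card_le_card hsub
  omega

lemma exists_frobAlgEquiv [FiniteDimensional K F] :
    ∃ e : F ≃ₐ[K] F, ∀ x : F, e x = x ^ Fintype.card K := by
  classical
  let p := ringChar K
  haveI : CharP K p := ringChar.charP K
  haveI hp : Fact p.Prime := ⟨CharP.char_is_prime K p⟩
  haveI : CharP F p := charP_of_injective_algebraMap (algebraMap K F).injective p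
  obtain ⟨n, hn⟩ := FiniteField.card K p
  haveI : Finite F := Module.finite_of_finite K
  have commutes : ∀ k : K, iterateFrobenius F p n (algebraMap K F k) = algebraMap K F k := by
    intro k
    rw [iterateFrobenius_def, ← map_pow, ← hn.2, FiniteField.pow_card]
  refine ⟨AlgEquiv.ofBijective ⟨iterateFrobenius F p n, commutes⟩
    ((Finite.injective_iff_bijective).mp (iterateFrobenius F p n).injective), ?_⟩
  intro x
  show iterateFrobenius F p n x = _
  rw [iterateFrobenius_def, hn.2]

lemma trace_pow_card' [FiniteDimensional K F] (x : F) :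
    Algebra.trace K F (x ^ Fintype.card K) = Algebra.trace K F x := by
  obtain ⟨e, he⟩ := exists_frobAlgEquiv (K := K) (F := F)
  rw [← he x, Algebra.trace_eq_of_algEquiv]

end aux

/-- The image of `Kˣ` in `Fˣ`, as a subgroup of `Fˣ`. -/
def baseUnits (K F : Type*) [Field K] [Field F] [Algebra K F] : Subgroup Fˣ :=
  (Units.map (algebraMap K F).toMonoidHom).range

/-- The quotient group `P = Fˣ/Kˣ`. -/
abbrev ProjPts (K F : Type*) [Field K] [Field F] [Algebra K F] : Type _ :=
  Fˣ ⧸ baseUnits K F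

/-- The class in `P = Fˣ/Kˣ` of a unit `x ∈ Fˣ`. -/
def pbar {K F : Type*} [Field K] [Field F] [Algebra K F] (x : Fˣ) : ProjPts K F :=
  QuotientGroup.mk x

/-- The triangle presentation of Tits type:
`𝒯₀ = {(x̄, x̄·ξ̄, x̄·ξ̄^(q+1)) : x, ξ ∈ Fˣ, Tr(ξ) = 0}`. -/
def titsT0 (q : ℕ) (K F : Type*) [Field K] [Field F] [Algebra K F] :
    Set (ProjPts K F × ProjPts K F × ProjPts K F) :=
  {t | ∃ x ξ : Fˣ, Algebra.trace K F (ξ : F) = 0 ∧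
        t = (pbar x, pbar x * pbar ξ, pbar x * pbar ξ ^ (q + 1))}

lemma pbar_mul {K F : Type*} [Field K] [Field F] [Algebra K F] (x y : Fˣ) :
    pbar (K := K) (x * y) = pbar x * pbar y := rfl

lemma pbar_pow {K F : Type*} [Field K] [Field F] [Algebra K F] (x : Fˣ) (n : ℕ) :
    pbar (K := K) (x ^ n) = pbar x ^ n := by
  induction n with
  | zero => rfl
  | succ n ih => rw [pow_succ, pow_succ, ← ih]; rfl

theorem stmt15 (q : ℕ) (hq : IsPrimePow q) (K F : Type*) [Field K] [Field F]
    [Algebra K F] [Fintype K] (hK : Fintype.card K = q)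
    (hd : Module.finrank K F = 3) :
    ∀ a b c : ProjPts K F, (a, b, c) ∈ titsT0 q K F → (b, c, a) ∈ titsT0 q K F := by
  classical
  intro a b c h
  obtain ⟨x, ξ, hξ, heq⟩ := h
  have hq2 : 2 ≤ q := hq.two_le
  haveI : FiniteDimensional K F := FiniteDimensional.of_finrank_pos (by omega)
  haveI : Finite F := Module.finite_of_finite K
  haveI : Fintype F := Fintype.ofFinite F
  have hcF : Fintype.card F = q ^ 3 := by
    rw [Module.card_eq_pow_finrank (K := K), hK, hd]
  -- the unit ξ^(q²+q+1) lies in the image of Kˣ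
  have h1 : ξ ^ (q ^ 3 - 1) = 1 := by
    rw [← hcF, ← Fintype.card_units]
    exact pow_card_eq_one
  have hupow : (ξ ^ (q ^ 2 + q + 1)) ^ q = ξ ^ (q ^ 2 + q + 1) := by
    have e1 : (q ^ 2 + q + 1) * q = (q ^ 3 - 1) + (q ^ 2 + q + 1) := by
      have h3 : 1 ≤ q ^ 3 := Nat.one_le_pow _ _ (by omega)
      zify [h3]; ring
    rw [← pow_mul, e1, pow_add, h1, one_mul]
  have hmem : ξ ^ (q ^ 2 + q + 1) ∈ baseUnits K F := by
    have hz : ((ξ ^ (q ^ 2 + q + 1) : Fˣ) : F) ^ Fintype.card K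
        = ((ξ ^ (q ^ 2 + q + 1) : Fˣ) : F) := by
      rw [hK, ← Units.val_pow_eq_pow_val, hupow]
    obtain ⟨k, hk⟩ := mem_range_of_pow_eq (by omega) _ hz
    have hk0 : k ≠ 0 := by
      intro h0
      rw [h0, map_zero] at hk
      exact (Units.ne_zero _) hk.symm
    exact ⟨Units.mk0 k hk0, Units.ext (by simpa using hk)⟩
  have key : (pbar ξ : ProjPts K F) ^ (q ^ 2 + q + 1) = 1 := by
    rw [← pbar_pow]
    exact (QuotientGroup.eq_one_iff _).mpr hmem
  refine ⟨x * ξ, ξ ^ q, ?_, ?_⟩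
  · rw [Units.val_pow_eq_pow_val, ← hK, trace_pow_card', hξ]
  · rw [Prod.mk.injEq, Prod.mk.injEq] at heq
    obtain ⟨ha, hb, hc⟩ := heq
    rw [ha, hb, hc, Prod.mk.injEq, Prod.mk.injEq, pbar_mul, pbar_pow]
    refine ⟨rfl, ?_, ?_⟩
    · rw [mul_assoc, ← pow_succ']
    · rw [mul_assoc, ← pow_mul, ← pow_succ']
      have e2 : q * (q + 1) + 1 = q ^ 2 + q + 1 := by ring
      rw [e2, key]
      exact (mul_one (pbar (K := K) x)).symm
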